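/- Regret of optimistic linear bandits with valid confidence ellipsoids: let ρ > 0, let 𝒳 ⊆ ℝ^d be a set with ‖x‖² ≤ ρ for all x ∈ 𝒳, let θ* ∈ ℝ^d, and suppose x* ∈ 𝒳 maximizes x ↦ ⟨x, θ*⟩ over 𝒳. For t = 1, …, T let V_{t-1} = Σ_{i=1}^{t-1} X_i X_iᵀ, let c_{t-1} ∈ ℝ^d and η_{t-1} ≥ 0 with (η_t) nondecreasing, let Π_{t-1} = { f : ‖(V_{t-1} + ρI)^{1/2}(f − c_{t-1})‖ ≤ η_{t-1} }, and suppose θ* ∈ Π_{t-1} and that (X_t, θ̃_t) ∈ 𝒳 × Π_{t-1} maximizes (x, f) ↦ ⟨f, x⟩ over 𝒳 × Π_{t-1}. Then the cumulative regret satisfies R_T = Σ_{t=1}^T ( ⟨x*, θ*⟩ − ⟨X_t, θ*⟩ ) ≤ 2 η_{T-1} sqrt( 2 T log det( I + ρ^{-1} V_T ) ). -/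

import Mathlib

open Matrix

private lemma dot_self_nonneg' {d : ℕ} (a : Fin d → ℝ) : 0 ≤ a ⬝ᵥ a :=
  Finset.sum_nonneg fun i _ => mul_self_nonneg _

private lemma dot_CS {d : ℕ} (a b : Fin d → ℝ) :
    a ⬝ᵥ b ≤ Real.sqrt (a ⬝ᵥ a) * Real.sqrt (b ⬝ᵥ b) := by
  have := Real.sum_mul_le_sqrt_mul_sqrt Finset.univ a b
  simpa [dotProduct, sq] using this

private lemma sqrt_dot_sub_le {d : ℕ} (a b : Fin d → ℝ) :
    Real.sqrt ((a - b) ⬝ᵥ (a - b)) ≤ Real.sqrt (a ⬝ᵥ a) + Real.sqrt (b ⬝ᵥ b) := by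
  have hcs := dot_CS a b
  have e : (a - b) ⬝ᵥ (a - b) = a ⬝ᵥ a - 2 * (a ⬝ᵥ b) + b ⬝ᵥ b := by
    rw [sub_dotProduct, dotProduct_sub, dotProduct_sub, dotProduct_comm b a]; ring
  have sa := Real.sq_sqrt (dot_self_nonneg' a)
  have sb := Real.sq_sqrt (dot_self_nonneg' b)
  have h : (a - b) ⬝ᵥ (a - b) ≤ (Real.sqrt (a ⬝ᵥ a) + Real.sqrt (b ⬝ᵥ b)) ^ 2 := by
    rw [e]
    have expand : (Real.sqrt (a ⬝ᵥ a) + Real.sqrt (b ⬝ᵥ b)) ^ 2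
        = Real.sqrt (a ⬝ᵥ a) ^ 2 + 2 * (Real.sqrt (a ⬝ᵥ a) * Real.sqrt (b ⬝ᵥ b))
          + Real.sqrt (b ⬝ᵥ b) ^ 2 := by ring
    have hcs2 : -(a ⬝ᵥ b) ≤ Real.sqrt (a ⬝ᵥ a) * Real.sqrt (b ⬝ᵥ b) := by
      have := dot_CS (-a) b
      simpa [neg_dotProduct] using this
    rw [expand, sa, sb]
    linarith
  calc Real.sqrt ((a - b) ⬝ᵥ (a - b))
      ≤ Real.sqrt ((Real.sqrt (a ⬝ᵥ a) + Real.sqrt (b ⬝ᵥ b)) ^ 2) := Real.sqrt_le_sqrt h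
    _ = _ := Real.sqrt_sq (by positivity)

private lemma le_two_log (u : ℝ) (h0 : 0 ≤ u) (h1 : u ≤ 1) : u ≤ 2 * Real.log (1 + u) := by
  have hpos : (0:ℝ) < 1 - u / 2 := by linarith
  have h2 : Real.exp (u / 2) ≤ 1 + u := by
    have hb : 1 - u / 2 ≤ Real.exp (-(u / 2)) := by
      have := Real.add_one_le_exp (-(u / 2)); linarith
    have hinv : Real.exp (u / 2) = (Real.exp (-(u / 2)))⁻¹ := by
      rw [Real.exp_neg, inv_inv]
    rw [hinv]
    have h3 : (Real.exp (-(u / 2)))⁻¹ ≤ (1 - u / 2)⁻¹ := inv_anti₀ hpos hb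
    refine h3.trans ?_
    rw [inv_eq_one_div, div_le_iff₀ hpos]
    nlinarith
  have h4 : u / 2 ≤ Real.log (1 + u) := by
    rw [Real.le_log_iff_exp_le (by linarith)]; exact h2
  linarith

private lemma dot_sum {d : ℕ} {ι : Type*} (s : Finset ι) (v : Fin d → ℝ) (f : ι → Fin d → ℝ) :
    v ⬝ᵥ (∑ i ∈ s, f i) = ∑ i ∈ s, v ⬝ᵥ f i := by
  induction s using Finset.cons_induction with
  | empty => simp
  | cons a s ha ih => simp [Finset.sum_cons, dotProduct_add, ih]

private lemma sum_mat_mulVec {d : ℕ} {ι : Type*} (s : Finset ι)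
    (M : ι → Matrix (Fin d) (Fin d) ℝ) (v : Fin d → ℝ) :
    (∑ i ∈ s, M i) *ᵥ v = ∑ i ∈ s, M i *ᵥ v := by
  induction s using Finset.cons_induction with
  | empty => simp
  | cons a s ha ih => simp [Finset.sum_cons, Matrix.add_mulVec, ih]

private lemma vecMulVec_mulVec' {d : ℕ} (a z : Fin d → ℝ) :
    vecMulVec a a *ᵥ z = (a ⬝ᵥ z) • a := by
  ext i
  simp only [Matrix.mulVec, vecMulVec_apply, dotProduct, Pi.smul_apply, smul_eq_mul,
    Finset.sum_mul]
  exact Finset.sum_congr rfl fun j _ => by ring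
theorem stmt_17 (d : ℕ) (ρ : ℝ) (hρ : 0 < ρ) (T : ℕ) (hT : 1 ≤ T)
    (𝒳 : Set (Fin d → ℝ)) (h𝒳 : ∀ x ∈ 𝒳, x ⬝ᵥ x ≤ ρ)
    (θstar : Fin d → ℝ)
    (xstar : Fin d → ℝ) (hxstar : xstar ∈ 𝒳)
    (hxmax : ∀ x ∈ 𝒳, x ⬝ᵥ θstar ≤ xstar ⬝ᵥ θstar)
    (X : ℕ → Fin d → ℝ)
    (V : ℕ → Matrix (Fin d) (Fin d) ℝ)
    (hV : ∀ s, V s = ∑ i ∈ Finset.Icc 1 s, vecMulVec (X i) (X i))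
    (c : ℕ → Fin d → ℝ) (η : ℕ → ℝ) (hη0 : ∀ s, 0 ≤ η s) (hηmono : Monotone η)
    (Q : ℕ → Matrix (Fin d) (Fin d) ℝ)
    (hQ : ∀ s, (Q s).PosDef ∧
      Q s * Q s = V s + ρ • (1 : Matrix (Fin d) (Fin d) ℝ))
    (θt : ℕ → Fin d → ℝ)
    (hmem : ∀ t, 1 ≤ t → t ≤ T → X t ∈ 𝒳 ∧
      Real.sqrt ((Q (t - 1) *ᵥ (θt t - c (t - 1))) ⬝ᵥ (Q (t - 1) *ᵥ (θt t - c (t - 1)))) ≤ η (t - 1))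
    (hθstar : ∀ t, 1 ≤ t → t ≤ T →
      Real.sqrt ((Q (t - 1) *ᵥ (θstar - c (t - 1))) ⬝ᵥ (Q (t - 1) *ᵥ (θstar - c (t - 1)))) ≤ η (t - 1))
    (hopt : ∀ t, 1 ≤ t → t ≤ T → ∀ x ∈ 𝒳, ∀ f : Fin d → ℝ,
      Real.sqrt ((Q (t - 1) *ᵥ (f - c (t - 1))) ⬝ᵥ (Q (t - 1) *ᵥ (f - c (t - 1)))) ≤ η (t - 1) →
      f ⬝ᵥ x ≤ θt t ⬝ᵥ X t) :
    ∑ t ∈ Finset.Icc 1 T, (xstar ⬝ᵥ θstar - X t ⬝ᵥ θstar) ≤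
      2 * η (T - 1) * Real.sqrt (2 * (T : ℝ) * Real.log ((1 + ρ⁻¹ • V T).det)) := by
  have hQpd : ∀ s, (Q s).PosDef := fun s => (hQ s).1
  have hQQ : ∀ s, Q s * Q s = V s + ρ • (1 : Matrix (Fin d) (Fin d) ℝ) := fun s => (hQ s).2
  have hQsym : ∀ s, (Q s)ᵀ = Q s := fun s => by simpa [Matrix.IsSymm] using (hQpd s).isHermitian
  have hQunit : ∀ s, IsUnit (Q s).det := fun s => isUnit_iff_ne_zero.2 (hQpd s).det_pos.ne'
  set y : ℕ → Fin d → ℝ := fun t => (Q (t - 1))⁻¹ *ᵥ X t with hy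
  set u : ℕ → ℝ := fun t => y t ⬝ᵥ y t with hu
  have hXy : ∀ t, X t = Q (t - 1) *ᵥ y t := by
    intro t
    rw [hy]
    simp only [mulVec_mulVec, Matrix.mul_nonsing_inv _ (hQunit _), one_mulVec]
  have hu0 : ∀ t, 0 ≤ u t := fun t => dot_self_nonneg' _
  -- positive semidefiniteness of V
  have hVpsd : ∀ s (v : Fin d → ℝ), 0 ≤ v ⬝ᵥ (V s *ᵥ v) := by
    intro s v
    rw [hV s, sum_mat_mulVec]
    have : ∀ i, v ⬝ᵥ (vecMulVec (X i) (X i) *ᵥ v) = (X i ⬝ᵥ v) ^ 2 := by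
      intro i
      rw [vecMulVec_mulVec', dotProduct_smul, dotProduct_comm]
      simp [sq, smul_eq_mul]
    rw [dot_sum]
    exact Finset.sum_nonneg fun i _ => by rw [this i]; positivity
  -- ‖X t‖² in terms of y
  have hXnorm : ∀ t, X t ⬝ᵥ X t = y t ⬝ᵥ (V (t - 1) *ᵥ y t) + ρ * u t := by
    intro t
    conv_lhs => rw [hXy t]
    rw [dotProduct_mulVec, ← mulVec_transpose, hQsym, mulVec_mulVec, hQQ,
      Matrix.add_mulVec, smul_mulVec, one_mulVec, dotProduct_comm, dotProduct_add,
      dotProduct_smul]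
    rw [hu]
    simp [smul_eq_mul]
  have hu1 : ∀ t, 1 ≤ t → t ≤ T → u t ≤ 1 := by
    intro t h1 h2
    have hXX : X t ⬝ᵥ X t ≤ ρ := h𝒳 _ (hmem t h1 h2).1
    have := hXnorm t
    have hp := hVpsd (t - 1) (y t)
    nlinarith [hu0 t]
  -- per-step regret bound
  have hstep : ∀ t, 1 ≤ t → t ≤ T →
      xstar ⬝ᵥ θstar - X t ⬝ᵥ θstar ≤ 2 * η (T - 1) * Real.sqrt (u t) := by
    intro t h1 h2
    have hopt' : θstar ⬝ᵥ xstar ≤ θt t ⬝ᵥ X t :=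
      hopt t h1 h2 xstar hxstar θstar (hθstar t h1 h2)
    set a := Q (t - 1) *ᵥ (θt t - c (t - 1)) with ha'
    set b := Q (t - 1) *ᵥ (θstar - c (t - 1)) with hb'
    have key : θt t ⬝ᵥ X t - θstar ⬝ᵥ X t ≤ 2 * η (t - 1) * Real.sqrt (u t) := by
      have e1 : θt t ⬝ᵥ X t - θstar ⬝ᵥ X t = (θt t - θstar) ⬝ᵥ X t :=
        (sub_dotProduct _ _ _).symm
      have e2 : (θt t - θstar) ⬝ᵥ X t = (Q (t - 1) *ᵥ (θt t - θstar)) ⬝ᵥ y t := by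
        conv_lhs => rw [hXy t]
        rw [dotProduct_mulVec, ← mulVec_transpose, hQsym]
      have e3 : Q (t - 1) *ᵥ (θt t - θstar) = a - b := by
        rw [ha', hb', ← Matrix.mulVec_sub]
        congr 1
        abel
      have hcs : (a - b) ⬝ᵥ y t ≤ Real.sqrt ((a - b) ⬝ᵥ (a - b)) * Real.sqrt (u t) := dot_CS _ _
      have htri := sqrt_dot_sub_le a b
      have haa : Real.sqrt (a ⬝ᵥ a) ≤ η (t - 1) := (hmem t h1 h2).2
      have hbb : Real.sqrt (b ⬝ᵥ b) ≤ η (t - 1) := hθstar t h1 h2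
      rw [e1, e2, e3]
      have hsn := Real.sqrt_nonneg (u t)
      nlinarith [Real.sqrt_nonneg ((a - b) ⬝ᵥ (a - b))]
    have hmono : η (t - 1) ≤ η (T - 1) := hηmono (Nat.sub_le_sub_right h2 1)
    have c1 : xstar ⬝ᵥ θstar = θstar ⬝ᵥ xstar := dotProduct_comm _ _
    have c2 : X t ⬝ᵥ θstar = θstar ⬝ᵥ X t := dotProduct_comm _ _
    have c3 : θstar ⬝ᵥ X t = X t ⬝ᵥ θstar := dotProduct_comm _ _
    have hsn := Real.sqrt_nonneg (u t)
    nlinarith [key, hopt', hmono, hη0 (t - 1)]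
  -- determinant identity
  have hdet : ∀ s, (V s + ρ • (1 : Matrix (Fin d) (Fin d) ℝ)).det
      = ρ ^ d * ∏ t ∈ Finset.Icc 1 s, (1 + u t) := by
    intro s
    induction s with
    | zero =>
      have : V 0 = 0 := by rw [hV]; simp
      rw [this, zero_add, Matrix.det_smul, Matrix.det_one, Fintype.card_fin]
      simp
    | succ s ih =>
      have hVs : V (s + 1) = V s + vecMulVec (X (s + 1)) (X (s + 1)) := by
        rw [hV, hV, Finset.sum_Icc_succ_top (Nat.succ_le_succ (Nat.zero_le s))]
      have hys : X (s + 1) = Q s *ᵥ y (s + 1) := by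
        have := hXy (s + 1); simpa using this
      have hWs : V (s + 1) + ρ • (1 : Matrix (Fin d) (Fin d) ℝ)
          = Q s * Q s + vecMulVec (Q s *ᵥ y (s + 1)) (Q s *ᵥ y (s + 1)) := by
        rw [hVs, hQQ s, ← hys]
        abel
      have h1 : vecMulVec (Q s *ᵥ y (s + 1)) (Q s *ᵥ y (s + 1))
          = Q s * (replicateCol (Fin 1) (y (s + 1)) * replicateRow (Fin 1) (y (s + 1))) * Q s := by
        rw [vecMulVec_eq (Fin 1), replicateCol_mulVec, replicateRow_mulVec, Matrix.transpose_mul,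
          Matrix.transpose_replicateCol, hQsym]
        simp [Matrix.mul_assoc]
        rfl
      have h2 : V (s + 1) + ρ • (1 : Matrix (Fin d) (Fin d) ℝ)
          = Q s * (1 + replicateCol (Fin 1) (y (s + 1)) * replicateRow (Fin 1) (y (s + 1))) * Q s := by
        rw [hWs, h1, Matrix.mul_add, Matrix.add_mul, Matrix.mul_one]
      rw [h2, Matrix.det_mul, Matrix.det_mul, show (1 + replicateCol (Fin 1) (y (s + 1)) * replicateRow (Fin 1) (y (s + 1)) : Matrix (Fin d) (Fin d) ℝ).det = 1 + y (s + 1) ⬝ᵥ y (s + 1) from det_one_add_replicateCol_mul_replicateRow (ι := Fin 1) _ _]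
      have hdetW : (Q s).det * (Q s).det = (V s + ρ • (1 : Matrix (Fin d) (Fin d) ℝ)).det := by
        rw [← Matrix.det_mul, hQQ s]
      have hprod : ∏ t ∈ Finset.Icc 1 (s + 1), (1 + u t)
          = (∏ t ∈ Finset.Icc 1 s, (1 + u t)) * (1 + u (s + 1)) :=
        Finset.prod_Icc_succ_top (Nat.succ_le_succ (Nat.zero_le s)) _
      have huy : y (s + 1) ⬝ᵥ y (s + 1) = u (s + 1) := rfl
      calc (Q s).det * (1 + y (s + 1) ⬝ᵥ y (s + 1)) * (Q s).det
          = (Q s).det * (Q s).det * (1 + u (s + 1)) := by rw [huy]; ring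
        _ = (V s + ρ • (1 : Matrix (Fin d) (Fin d) ℝ)).det * (1 + u (s + 1)) := by rw [hdetW]
        _ = ρ ^ d * ∏ t ∈ Finset.Icc 1 (s + 1), (1 + u t) := by rw [ih, hprod]; ring
  have hprodT : ((1 : Matrix (Fin d) (Fin d) ℝ) + ρ⁻¹ • V T).det
      = ∏ t ∈ Finset.Icc 1 T, (1 + u t) := by
    have h1 : (1 : Matrix (Fin d) (Fin d) ℝ) + ρ⁻¹ • V T
        = ρ⁻¹ • (V T + ρ • (1 : Matrix (Fin d) (Fin d) ℝ)) := by
      rw [smul_add, smul_smul, inv_mul_cancel₀ hρ.ne', one_smul, add_comm]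
    rw [h1, Matrix.det_smul, Fintype.card_fin, hdet T, ← mul_assoc, ← mul_pow,
      inv_mul_cancel₀ hρ.ne', one_pow, one_mul]
  have hlog : Real.log ((1 + ρ⁻¹ • V T).det) = ∑ t ∈ Finset.Icc 1 T, Real.log (1 + u t) := by
    rw [hprodT, Real.log_prod]
    intro t _
    have := hu0 t
    positivity
  have hsumu : ∑ t ∈ Finset.Icc 1 T, u t ≤ 2 * Real.log ((1 + ρ⁻¹ • V T).det) := by
    rw [hlog, Finset.mul_sum]
    refine Finset.sum_le_sum fun t ht => ?_
    obtain ⟨h1, h2⟩ := Finset.mem_Icc.1 ht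
    exact le_two_log (u t) (hu0 t) (hu1 t h1 h2)
  have hlognn : 0 ≤ Real.log ((1 + ρ⁻¹ • V T).det) := by
    rw [hlog]
    refine Finset.sum_nonneg fun t _ => Real.log_nonneg ?_
    have := hu0 t; linarith
  have hcard : ((Finset.Icc 1 T).card : ℝ) = (T : ℝ) := by
    rw [Nat.card_Icc]; simp
  calc ∑ t ∈ Finset.Icc 1 T, (xstar ⬝ᵥ θstar - X t ⬝ᵥ θstar)
      ≤ ∑ t ∈ Finset.Icc 1 T, 2 * η (T - 1) * Real.sqrt (u t) := by
        refine Finset.sum_le_sum fun t ht => ?_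
        obtain ⟨h1, h2⟩ := Finset.mem_Icc.1 ht
        exact hstep t h1 h2
    _ = 2 * η (T - 1) * ∑ t ∈ Finset.Icc 1 T, Real.sqrt (u t) := by rw [Finset.mul_sum]
    _ ≤ 2 * η (T - 1) * Real.sqrt (2 * (T : ℝ) * Real.log ((1 + ρ⁻¹ • V T).det)) := by
        refine mul_le_mul_of_nonneg_left ?_ (by have := hη0 (T - 1); linarith)
        have hCS : ∑ t ∈ Finset.Icc 1 T, Real.sqrt (u t)
            ≤ Real.sqrt (∑ t ∈ Finset.Icc 1 T, u t) * Real.sqrt ((Finset.Icc 1 T).card : ℝ) := by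
          have h := Real.sum_sqrt_mul_sqrt_le (Finset.Icc 1 T) hu0 (fun _ => zero_le_one (α := ℝ))
          simpa [Finset.sum_const, nsmul_eq_mul] using h
        refine hCS.trans ?_
        rw [hcard, ← Real.sqrt_mul (Finset.sum_nonneg fun t _ => hu0 t)]
        refine Real.sqrt_le_sqrt ?_
        calc (∑ t ∈ Finset.Icc 1 T, u t) * (T : ℝ)
            ≤ (2 * Real.log ((1 + ρ⁻¹ • V T).det)) * (T : ℝ) :=
              mul_le_mul_of_nonneg_right hsumu (Nat.cast_nonneg T)
          _ = 2 * (T : ℝ) * Real.log ((1 + ρ⁻¹ • V T).det) := by ring
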